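/- There exist Büchi automata 𝒜 and ℬ such that L(𝒜) ⊆ L(ℬ) but Duplicator has no winning strategy in the unbounded single-buffer simulation game, i.e., 𝒜 ⋢ω ℬ. -/

import Mathlib

open scoped Classical

/-- A Büchi automaton over alphabet `S`. -/
structure BA (S : Type) where
  Q : Type
  init : Q
  trans : Q → S → Q → Prop
  acc : Q → Prop

/-- The Büchi language of `A`: infinite words with a run from the initial state
visiting accepting states infinitely often. -/
def BA.Lang {S : Type} (A : BA S) : Set (ℕ → S) :=
  { w | ∃ ρ : ℕ → A.Q, ρ 0 = A.init ∧ (∀ n, A.trans (ρ n) (w n) (ρ (n+1))) ∧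
        ∀ n, ∃ m, n ≤ m ∧ A.acc (ρ m) }

/-- Single-buffer game: the configuration after Spoiler's move `(a, q')`:
 `a` is appended to the buffer. -/
def midCfg1 {S : Type} {QA QB : Type} (c : QA × List S × QB) (m : S × QA) :
    QA × List S × QB :=
  (m.2, c.2.1 ++ [m.1], c.2.2)

/-- Duplicator's move in the single-buffer game: skip (`none`) or consume the oldest
buffered letter along a matching transition to state `p'` (`some p'`). -/
noncomputable def dupApply1 {S : Type} (A B : BA S) :
    (A.Q × List S × B.Q) → Option B.Q → Option (A.Q × List S × B.Q)
  | c, none => some c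
  | c, some p' =>
    match c.2.1 with
    | [] => none
    | b :: γ => if B.trans c.2.2 b p' then some (c.1, γ, p') else none

/-- The configuration at the start of round `n` of the single-buffer game. -/
noncomputable def playCfg1 {S : Type} (A B : BA S)
    (sp : ℕ → S × A.Q) (dm : ℕ → Option B.Q) : ℕ → Option (A.Q × List S × B.Q)
  | 0 => some (A.init, [], B.init)
  | n+1 =>
    match playCfg1 A B sp dm n with
    | none => none
    | some c =>
      if A.trans c.1 (sp n).1 (sp n).2 then dupApply1 A B (midCfg1 c (sp n)) (dm n) else none

/-- Duplicator's winning condition for the single-buffer game with capacity `k`: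
the buffer never exceeds `k` (checked after her moves), and either Spoiler's run is
non-accepting, or Duplicator moves infinitely often and her run visits accepting
states infinitely often. -/
def Win1 {S : Type} (A B : BA S) (k : ℕ∞)
    (sp : ℕ → S × A.Q) (dm : ℕ → Option B.Q) : Prop :=
  (∀ n c, playCfg1 A B sp dm n = some c → (c.2.1.length : ℕ∞) ≤ k) ∧
  ((∃ N, ∀ n, N ≤ n → ¬ A.acc (sp n).2) ∨
    ((∀ n, ∃ m, n ≤ m ∧ dm m ≠ none) ∧ (∀ n, ∃ m, n ≤ m ∧ ∃ p ∈ dm m, B.acc p)))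

/-- Single-buffer simulation `A ⊑k B`: Duplicator has a winning strategy in the
single-buffer simulation game with buffer capacity `k` (`k = ⊤` is the unbounded
buffer). -/
def Sim1 {S : Type} (A B : BA S) (k : ℕ∞) : Prop :=
  ∃ dstrat : List ((S × A.Q) × Option B.Q) → (S × A.Q) → Option B.Q,
    ∀ sp dm, (∀ n, dm n = dstrat (List.ofFn fun i : Fin n => (sp i, dm i)) (sp n)) →
      (∀ n c, playCfg1 A B sp dm n = some c → A.trans c.1 (sp n).1 (sp n).2) →
      (∀ n, (playCfg1 A B sp dm n).isSome) ∧ Win1 A B k sp dm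

section Counterexample

/-- States of the automaton `BB`. -/
inductive BQ : Type
  | p0 | f | da | db
deriving DecidableEq

/-- The automaton `AA`: one accepting state, full transition relation. -/
def AA : BA Bool := ⟨Unit, (), fun _ _ _ => True, fun _ => True⟩

/-- Transition relation of `BB`. -/
def btrans (q : BQ) (b : Bool) (p : BQ) : Prop :=
  (q = .p0 ∧ p = .p0) ∨
  (q = .p0 ∧ b = false ∧ p = .f) ∨
  (q = .f ∧ b = false ∧ p = .f) ∨
  ((q = .p0 ∨ q = .da ∨ q = .db) ∧ ((b = true ∧ p = .da) ∨ (b = false ∧ p = .db)))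

/-- Acceptance of `BB`. -/
def bacc (p : BQ) : Prop := p = .f ∨ p = .da

/-- The automaton `BB`. -/
def BB : BA Bool := ⟨BQ, .p0, btrans, bacc⟩

lemma lang_all (w : ℕ → Bool) : w ∈ BA.Lang BB := by
  by_cases h : ∀ N, ∃ n, N ≤ n ∧ w n = true
  · refine ⟨fun n => match n with | 0 => BQ.p0 | (k+1) => if w k then BQ.da else BQ.db,
      rfl, ?_, ?_⟩
    · intro n
      match n with
      | 0 => cases hw : w 0 <;> simp [hw, BB, btrans]
      | (k+1) => cases hw : w k <;> cases hw' : w (k+1) <;> simp [hw, hw', BB, btrans]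
    · intro n
      obtain ⟨m, hm, hw⟩ := h n
      exact ⟨m + 1, hm.trans (Nat.le_succ m), by simp [hw, BB, bacc]⟩
  · push_neg at h
    obtain ⟨N, hN⟩ := h
    simp only [Bool.not_eq_true] at hN
    refine ⟨fun n => if n ≤ N then BQ.p0 else BQ.f, ?_, ?_, ?_⟩
    · show (if 0 ≤ N then BQ.p0 else BQ.f) = BB.init
      rw [if_pos (Nat.zero_le N)]
      rfl
    · intro n
      rcases lt_trichotomy n N with hlt | heq | hgt
      · simp only [if_pos hlt.le, if_pos (show n + 1 ≤ N by omega)]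
        exact Or.inl ⟨if_pos hlt.le, if_pos (show n + 1 ≤ N by omega)⟩
      · subst heq
        simp only [if_pos le_rfl, if_neg (by omega : ¬ n + 1 ≤ n)]
        exact Or.inr (Or.inl ⟨if_pos le_rfl, hN n le_rfl, if_neg (by omega : ¬ n + 1 ≤ n)⟩)
      · simp only [if_neg (by omega : ¬ n ≤ N), if_neg (by omega : ¬ n + 1 ≤ N)]
        exact Or.inr (Or.inr (Or.inl ⟨if_neg (by omega : ¬ n ≤ N), hN n hgt.le, if_neg (by omega : ¬ n + 1 ≤ N)⟩))
    · intro n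
      refine ⟨max n (N + 1), le_max_left _ _, ?_⟩
      show bacc (if max n (N+1) ≤ N then BQ.p0 else BQ.f)
      rw [if_neg (by omega : ¬ max n (N+1) ≤ N)]
      exact Or.inl rfl

lemma btrans_f_inv {b : Bool} {p : BQ} (h : btrans BQ.f b p) : b = false ∧ p = BQ.f := by
  rcases h with ⟨h1, _⟩ | ⟨h1, _⟩ | ⟨_, h2, h3⟩ | ⟨h1, _⟩
  · exact absurd h1 (by simp)
  · exact absurd h1 (by simp)
  · exact ⟨h2, h3⟩
  · rcases h1 with h1 | h1 | h1 <;> exact absurd h1 (by simp)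

lemma btrans_false_da {q : BQ} (h : btrans q false BQ.da) : False := by
  rcases h with ⟨_, h2⟩ | ⟨_, _, h3⟩ | ⟨_, _, h3⟩ | ⟨_, ⟨h2, _⟩ | ⟨_, h3⟩⟩ <;>
    first | exact absurd h2 (by simp) | exact absurd h3 (by simp)

/-- Spoiler's letter choice given the current configuration. -/
def spLet : Option (Unit × List Bool × BQ) → Bool
  | some (_, _, .f) => true
  | _ => false

lemma spLet_f {c : Unit × List Bool × BQ} (h : c.2.2 = BQ.f) : spLet (some c) = true := by
  obtain ⟨u, l, q⟩ := c
  cases q <;> simp_all [spLet]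

lemma spLet_not_f {c : Unit × List Bool × BQ} (h : c.2.2 ≠ BQ.f) : spLet (some c) = false := by
  obtain ⟨u, l, q⟩ := c
  cases q <;> simp_all [spLet]

/-- The adaptive play against a given Duplicator strategy: history and configuration. -/
noncomputable def FF (dstrat : List ((Bool × Unit) × Option BQ) → (Bool × Unit) → Option BQ) :
    ℕ → List ((Bool × Unit) × Option BQ) × Option (Unit × List Bool × BQ)
  | 0 => ([], some ((), [], .p0))
  | n+1 =>
      ((FF dstrat n).1 ++
        [((spLet (FF dstrat n).2, ()), dstrat (FF dstrat n).1 (spLet (FF dstrat n).2, ()))],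
       match (FF dstrat n).2 with
       | none => none
       | some c =>
           dupApply1 AA BB (midCfg1 c (spLet (FF dstrat n).2, ()))
             (dstrat (FF dstrat n).1 (spLet (FF dstrat n).2, ())))

/-- Spoiler's moves. -/
noncomputable def spq (dstrat : List ((Bool × Unit) × Option BQ) → (Bool × Unit) → Option BQ)
    (n : ℕ) : Bool × Unit := (spLet (FF dstrat n).2, ())

/-- Duplicator's moves. -/
noncomputable def dmq (dstrat : List ((Bool × Unit) × Option BQ) → (Bool × Unit) → Option BQ)
    (n : ℕ) : Option BQ := dstrat (FF dstrat n).1 (spq dstrat n)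

lemma FFhist (dstrat : List ((Bool × Unit) × Option BQ) → (Bool × Unit) → Option BQ) (n : ℕ) :
    (FF dstrat n).1 = List.ofFn (fun i : Fin n => (spq dstrat i, dmq dstrat i)) := by
  induction n with
  | zero => simp [FF]
  | succ n ih =>
      rw [List.ofFn_succ']
      show (FF dstrat n).1 ++ [(spq dstrat n, dmq dstrat n)] = _
      rw [ih, List.concat_eq_append]
      simp

lemma FFcfg (dstrat : List ((Bool × Unit) × Option BQ) → (Bool × Unit) → Option BQ) (n : ℕ) :
    (FF dstrat n).2 = playCfg1 AA BB (spq dstrat) (dmq dstrat) n := by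
  induction n with
  | zero => rfl
  | succ n ih =>
      show (FF dstrat (n+1)).2 = playCfg1 AA BB (spq dstrat) (dmq dstrat) (n+1)
      rw [playCfg1.eq_2 (A := AA) (B := BB) (sp := spq dstrat) (dm := dmq dstrat), ← ih]
      cases h2 : (FF dstrat n).2 with
      | none => simp [FF, h2]; rfl
      | some c =>
          have key : (FF dstrat (n+1)).2 = dupApply1 AA BB (midCfg1 c (spLet (some c), ()))
              (dstrat (FF dstrat n).1 (spLet (some c), ())) := by
            show (match (FF dstrat n).2 with
              | none => none
              | some c' => dupApply1 AA BB (midCfg1 c' (spLet (FF dstrat n).2, ()))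
                  (dstrat (FF dstrat n).1 (spLet (FF dstrat n).2, ()))) = _
            rw [h2]
          rw [key]
          show _ = if AA.trans c.1 (spq dstrat n).1 (spq dstrat n).2 then
              dupApply1 AA BB (midCfg1 c (spq dstrat n)) (dmq dstrat n) else none
          rw [if_pos (show AA.trans c.1 (spq dstrat n).1 (spq dstrat n).2 from trivial)]
          simp only [spq, dmq]
          rw [h2]
          rfl

lemma dup_some {c c' : Unit × List Bool × BQ} {p : BQ}
    (h : dupApply1 AA BB c (some p) = some c') :
    ∃ b γ, c.2.1 = b :: γ ∧ btrans c.2.2 b p ∧ c' = (c.1, γ, p) := by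
  obtain ⟨u, l, q⟩ := c
  cases l with
  | nil => simp [dupApply1] at h
  | cons b γ =>
      by_cases hb : BB.trans q b p
      · refine ⟨b, γ, rfl, hb, ?_⟩
        have : (if BB.trans q b p then some ((u, γ, p) : Unit × List Bool × BQ) else none)
            = some c' := h
        rw [if_pos hb] at this
        exact (Option.some_inj.mp this).symm
      · have : (if BB.trans q b p then some ((u, γ, p) : Unit × List Bool × BQ) else none)
            = some c' := h
        rw [if_neg hb] at this
        exact absurd this (by simp)

end Counterexample

/-- The converse of "unbounded single-buffer simulation implies
language inclusion" fails: there are Büchi automata with `L(A) ⊆ L(B)` but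
`A ⋢ω B`. -/
theorem lang_incl_not_implies_sim1_unbounded :
    ∃ (S : Type) (A B : BA S), BA.Lang A ⊆ BA.Lang B ∧ ¬ Sim1 A B ⊤ := by
  refine ⟨Bool, AA, BB, fun w _ => lang_all w, ?_⟩
  rintro ⟨dstrat, hstrat⟩
  have hcons : ∀ n, dmq dstrat n =
      dstrat (List.ofFn fun i : Fin n => (spq dstrat i, dmq dstrat i)) (spq dstrat n) := by
    intro n
    erw [← FFhist dstrat]
    rfl
  obtain ⟨hsome, hwin⟩ := hstrat (spq dstrat) (dmq dstrat) hcons (fun _ _ _ => trivial)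
  obtain ⟨-, hdisj⟩ := hwin
  choose cfg hcfg using fun n => Option.isSome_iff_exists.mp (hsome n)
  rcases hdisj with ⟨N, hN⟩ | ⟨hmoves, hacc⟩
  · exact hN N le_rfl trivial
  have hcfg0 : cfg 0 = ((), [], BQ.p0) := by
    have h := hcfg 0
    have h0 : playCfg1 AA BB (spq dstrat) (dmq dstrat) 0
        = some (((), [], BQ.p0) : Unit × List Bool × BQ) := rfl
    rw [h0] at h
    exact (Option.some_inj.mp h).symm
  have hstep : ∀ n, dupApply1 AA BB (midCfg1 (cfg n) (spq dstrat n)) (dmq dstrat n)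
      = some (cfg (n+1)) := by
    intro n
    have h1 := hcfg (n+1)
    simp only [playCfg1, hcfg n] at h1
    rwa [if_pos (show AA.trans (cfg n).1 (spq dstrat n).1 (spq dstrat n).2 from trivial)] at h1
  have hsp : ∀ n, spq dstrat n = (spLet (some (cfg n)), ()) := by
    intro n
    show (spLet (FF dstrat n).2, ()) = _
    rw [FFcfg dstrat, hcfg n]
    rfl
  by_cases hf : ∃ n, (cfg n).2.2 = BQ.f
  · -- Duplicator eventually reaches `f`; from then on Spoiler plays `true`, which can
    -- never be consumed, so Duplicator moves only finitely often.
    obtain ⟨t, hft⟩ := hf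
    have hfAll : ∀ n, t ≤ n → (cfg n).2.2 = BQ.f := by
      intro n hn
      induction n, hn using Nat.le_induction with
      | base => exact hft
      | succ n hn ih =>
          have hs := hstep n
          cases hd : dmq dstrat n with
          | none =>
              rw [hd] at hs
              have hceq := Option.some_inj.mp
                (hs : some (midCfg1 (cfg n) (spq dstrat n)) = some (cfg (n+1)))
              rw [← hceq]
              exact ih
          | some p =>
              rw [hd] at hs
              obtain ⟨b0, γ, hbg, htr, hc'⟩ := dup_some hs
              have htr' : btrans BQ.f b0 p := by rw [← ih]; exact htr
              rw [hc']
              exact (btrans_f_inv htr').2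
    have hspT : ∀ n, t ≤ n → (spq dstrat n).1 = true := by
      intro n hn
      rw [hsp n, spLet_f (hfAll n hn)]
    have hstepμ : ∀ n, t ≤ n → (dmq dstrat n = none ∧
        List.count false (cfg (n+1)).2.1 = List.count false (cfg n).2.1) ∨
        (dmq dstrat n ≠ none ∧
        List.count false (cfg (n+1)).2.1 + 1 = List.count false (cfg n).2.1) := by
      intro n hn
      have hs := hstep n
      have e1 : List.count false ((cfg n).2.1 ++ [(spq dstrat n).1])
          = List.count false (cfg n).2.1 := by
        rw [hspT n hn]
        simp
      cases hd : dmq dstrat n with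
      | none =>
          left
          refine ⟨rfl, ?_⟩
          rw [hd] at hs
          have hceq := Option.some_inj.mp
            (hs : some (midCfg1 (cfg n) (spq dstrat n)) = some (cfg (n+1)))
          rw [← hceq]
          exact e1
      | some p =>
          right
          refine ⟨by simp, ?_⟩
          rw [hd] at hs
          obtain ⟨b0, γ, hbg, htr, hc'⟩ := dup_some hs
          have htr' : btrans BQ.f b0 p := by rw [← hfAll n hn]; exact htr
          obtain ⟨hb0, hpf⟩ := btrans_f_inv htr'
          have hbg' : (cfg n).2.1 ++ [(spq dstrat n).1] = b0 :: γ := hbg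
          rw [hbg', hb0] at e1
          rw [hc']
          show List.count false γ + 1 = _
          rw [← e1]
          simp [List.count_cons]
    have hanti : ∀ m n, t ≤ m → m ≤ n →
        List.count false (cfg n).2.1 ≤ List.count false (cfg m).2.1 := by
      intro m n hm hmn
      induction n, hmn using Nat.le_induction with
      | base => exact le_rfl
      | succ n hmn ih =>
          rcases hstepμ n (hm.trans hmn) with ⟨-, he⟩ | ⟨-, he⟩ <;> omega
    have hne : (Set.range fun k : ℕ => List.count false (cfg (t + k)).2.1).Nonempty :=
      ⟨List.count false (cfg (t + 0)).2.1, ⟨0, rfl⟩⟩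
    obtain ⟨k0, hk0⟩ := Nat.sInf_mem hne
    have hk0' : List.count false (cfg (t + k0)).2.1
        = sInf (Set.range fun k : ℕ => List.count false (cfg (t + k)).2.1) := hk0
    have hmin : ∀ n, t + k0 ≤ n →
        List.count false (cfg n).2.1 = List.count false (cfg (t + k0)).2.1 := by
      intro n hn
      have h1 : List.count false (cfg n).2.1 ≤ List.count false (cfg (t + k0)).2.1 :=
        hanti (t + k0) n (Nat.le_add_right t k0) hn
      have h2 : sInf (Set.range fun k : ℕ => List.count false (cfg (t + k)).2.1)
          ≤ List.count false (cfg n).2.1 := by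
        apply Nat.sInf_le
        refine ⟨n - t, ?_⟩
        show List.count false (cfg (t + (n - t))).2.1 = List.count false (cfg n).2.1
        rw [Nat.add_sub_cancel' (le_trans (Nat.le_add_right t k0) hn)]
      omega
    obtain ⟨m, hm, hmne⟩ := hmoves (t + k0)
    rcases hstepμ m (le_trans (Nat.le_add_right t k0) hm) with ⟨he, -⟩ | ⟨-, he⟩
    · exact hmne he
    · have e1 := hmin m hm
      have e2 := hmin (m + 1) (hm.trans (Nat.le_succ m))
      omega
  · -- Duplicator never reaches `f`; then Spoiler always plays `false`, and Duplicator
    -- can never make an accepting move.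
    have hspF : ∀ n, (spq dstrat n).1 = false := by
      intro n
      rw [hsp n, spLet_not_f (fun h => hf ⟨n, h⟩)]
    have hbufF : ∀ n, ∀ b ∈ (cfg n).2.1, b = false := by
      intro n
      induction n with
      | zero =>
          rw [hcfg0]
          intro b hb
          simp at hb
      | succ n ih =>
          have hs := hstep n
          cases hd : dmq dstrat n with
          | none =>
              rw [hd] at hs
              have hceq := Option.some_inj.mp
                (hs : some (midCfg1 (cfg n) (spq dstrat n)) = some (cfg (n+1)))
              intro b hb
              rw [← hceq] at hb
              rcases List.mem_append.mp hb with h | h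
              · exact ih b h
              · exact (List.mem_singleton.mp h).trans (hspF n)
          | some p =>
              rw [hd] at hs
              obtain ⟨b0, γ, hbg, htr, hc'⟩ := dup_some hs
              intro b hb
              rw [hc'] at hb
              have hbg' : (cfg n).2.1 ++ [(spq dstrat n).1] = b0 :: γ := hbg
              have hmem : b ∈ (cfg n).2.1 ++ [(spq dstrat n).1] := by
                rw [hbg']
                exact List.mem_cons_of_mem _ hb
              rcases List.mem_append.mp hmem with h | h
              · exact ih b h
              · exact (List.mem_singleton.mp h).trans (hspF n)
    obtain ⟨m, -, p, hpmem, hpacc⟩ := hacc 0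
    have hdm : dmq dstrat m = some p := Option.mem_def.mp hpmem
    have hs := hstep m
    rw [hdm] at hs
    obtain ⟨b0, γ, hbg, htr, hc'⟩ := dup_some hs
    have hbg' : (cfg m).2.1 ++ [(spq dstrat m).1] = b0 :: γ := hbg
    have hb0 : b0 = false := by
      have hmem : b0 ∈ (cfg m).2.1 ++ [(spq dstrat m).1] := by
        rw [hbg']
        exact List.mem_cons_self
      rcases List.mem_append.mp hmem with h | h
      · exact hbufF m b0 h
      · exact (List.mem_singleton.mp h).trans (hspF m)
    rcases hpacc with hpf | hpda
    · exact hf ⟨m + 1, by rw [hc']; exact hpf⟩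
    · subst hb0
      subst hpda
      exact btrans_false_da htr
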